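/- For the Lie algebra f = su(N) × su(N) with bracket [(P,B),(U,V)] = ([B,U]+[P,V]-[B,V],[B,V]) and the pairing ⟨(P₁,B₁),(P₂,B₂)⟩ = tr(P₁P₂) - tr((Δ B₁)B₂) for an invertible self-adjoint operator Δ on su(N) commuting appropriately, the coadjoint operator is ad*_{(P₁,B₁)}(P₂,B₂) = ([P₂,B₁], Δ⁻¹([P₁,P₂] + [P₂,B₁] + [Δ B₂, B₁])), i.e. ⟨ad*_{(P₁,B₁)}(P₂,B₂),(U,V)⟩ = ⟨(P₂,B₂),[(P₁,B₁),(U,V)]⟩ for all (U,V). -/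
import Mathlib

/-- For the Lie algebra `f = su(N) × su(N)` with bracket
`[(P,B),(U,V)] = ([B,U] + [P,V] - [B,V], [B,V])` and pairing
`⟨(P₁,B₁),(P₂,B₂)⟩ = tr(P₁P₂) - tr((ΔB₁)B₂)` for an invertible trace-symmetric
operator `Δ`, the coadjoint operator
`ad*_{(P₁,B₁)}(P₂,B₂) = ([P₂,B₁], Δ⁻¹([P₁,P₂] + [P₂,B₁] + [ΔB₂,B₁]))`
satisfies `⟨ad*_{(P₁,B₁)}(P₂,B₂),(U,V)⟩ = ⟨(P₂,B₂),[(P₁,B₁),(U,V)]⟩`. -/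
theorem stmt4 {N : ℕ}
    (Δ : Matrix (Fin N) (Fin N) ℂ ≃ₗ[ℂ] Matrix (Fin N) (Fin N) ℂ)
    (hΔ : ∀ A B : Matrix (Fin N) (Fin N) ℂ,
      ((Δ A) * B).trace = (A * (Δ B)).trace)
    (P₁ B₁ P₂ B₂ U V : Matrix (Fin N) (Fin N) ℂ) :
    (⁅P₂, B₁⁆ * U).trace -
        ((Δ (Δ.symm (⁅P₁, P₂⁆ + ⁅P₂, B₁⁆ + ⁅Δ B₂, B₁⁆))) * V).trace =
      (P₂ * (⁅B₁, U⁆ + ⁅P₁, V⁆ - ⁅B₁, V⁆)).trace - ((Δ B₂) * ⁅B₁, V⁆).trace := by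
  rw [Δ.apply_symm_apply]
  simp only [Ring.lie_def, Matrix.sub_mul, Matrix.mul_sub, Matrix.add_mul,
    Matrix.mul_add, Matrix.trace_sub, Matrix.trace_add, Matrix.mul_assoc]
  rw [Matrix.trace_mul_comm P₁ (P₂ * V), Matrix.trace_mul_comm B₁ (Δ B₂ * V),
    Matrix.trace_mul_comm (Δ B₂) (V * B₁),
    Matrix.trace_mul_comm B₁ (P₂ * U), Matrix.trace_mul_comm B₁ (P₂ * V),
    Matrix.trace_mul_comm (V * B₁) (Δ B₂)]
  simp only [Matrix.mul_assoc]
  ring
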